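/- arXiv:2103.14727 — 2 statements merged into one kernel-verified Lean document; each statement's English description precedes it below -/
import Mathlib

section
/- CVaR is an upper bound never exceeding EVaR: for any random variable c on a finite probability space and ε ∈ (0,1), CVaR_ε(c) ≤ EVaR_ε(c). -/
open Finset

lemma gibbs_aux {Ω : Type*} [Fintype Ω] [Nonempty Ω] (q f : Ω → ℝ)
    (hq : ∀ ω, 0 ≤ q ω) (hq1 : ∑ ω, q ω = 1) (hf : ∀ ω, 0 < f ω) :
    ∑ ω, (q ω * Real.log (f ω) - q ω * Real.log (q ω)) ≤ Real.log (∑ ω, f ω) := by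
  have hF : 0 < ∑ ω, f ω := Finset.sum_pos (fun ω _ => hf ω) univ_nonempty
  set F := ∑ ω, f ω with hFdef
  have key : ∀ ω, q ω * Real.log (f ω) - q ω * Real.log (q ω)
      ≤ q ω * Real.log F + (f ω / F - q ω) := by
    intro ω
    rcases eq_or_lt_of_le (hq ω) with h0 | h0
    · rw [← h0]
      simp only [zero_mul, sub_zero, zero_add, sub_zero]
      have : 0 ≤ f ω / F := div_nonneg (hf ω).le hF.le
      linarith
    · have hx : 0 < f ω / (q ω * F) := div_pos (hf ω) (mul_pos h0 hF)
      have hlog := Real.log_le_sub_one_of_pos hx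
      have heq : Real.log (f ω / (q ω * F)) = Real.log (f ω) - Real.log (q ω) - Real.log F := by
        rw [Real.log_div (ne_of_gt (hf ω)) (by positivity),
          Real.log_mul (ne_of_gt h0) (ne_of_gt hF)]
        ring
      rw [heq] at hlog
      have h2 := mul_le_mul_of_nonneg_left hlog (le_of_lt h0)
      have hq' : q ω * (f ω / (q ω * F) - 1) = f ω / F - q ω := by
        field_simp
      rw [hq'] at h2
      nlinarith [h2]
  calc ∑ ω, (q ω * Real.log (f ω) - q ω * Real.log (q ω))
      ≤ ∑ ω, (q ω * Real.log F + (f ω / F - q ω)) := Finset.sum_le_sum (fun ω _ => key ω)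
    _ = Real.log F := by
        rw [Finset.sum_add_distrib, Finset.sum_sub_distrib, ← Finset.sum_mul, hq1,
          ← Finset.sum_div, ← hFdef]
        field_simp
        ring

/-- CVaR never exceeds EVaR: for any random variable `c` on a finite probability space and
`ε ∈ (0,1)`, `CVaR_ε(c) ≤ EVaR_ε(c)`. -/
theorem stmt16 {Ω : Type*} [Fintype Ω] (P : Ω → ℝ)
    (hP : ∀ ω, 0 < P ω) (hP1 : ∑ ω : Ω, P ω = 1)
    (ε : ℝ) (hε0 : 0 < ε) (hε1 : ε < 1) (c : Ω → ℝ) :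
    sInf {x : ℝ | ∃ ζ : ℝ, x = ζ + (1 / ε) * ∑ ω : Ω, max (c ω - ζ) 0 * P ω} ≤
    sInf {x : ℝ | ∃ t : ℝ, 0 < t ∧
      x = (1 / t) * Real.log ((∑ ω : Ω, Real.exp (t * c ω) * P ω) / ε)} := by
  classical
  have hΩ : Nonempty Ω := by
    by_contra h
    rw [not_nonempty_iff] at h
    rw [Finset.univ_eq_empty, Finset.sum_empty] at hP1
    norm_num at hP1
  -- lower-boundedness of the CVaR set
  have hbdd : BddBelow {x : ℝ | ∃ ζ : ℝ, x = ζ + (1 / ε) * ∑ ω : Ω, max (c ω - ζ) 0 * P ω} := by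
    refine ⟨∑ ω, c ω * P ω, ?_⟩
    rintro x ⟨ζ, rfl⟩
    have h1 : ∑ ω, (c ω - ζ) * P ω ≤ ∑ ω, max (c ω - ζ) 0 * P ω :=
      Finset.sum_le_sum fun ω _ => mul_le_mul_of_nonneg_right (le_max_left _ _) (hP ω).le
    have h2 : (0:ℝ) ≤ ∑ ω, max (c ω - ζ) 0 * P ω :=
      Finset.sum_nonneg fun ω _ => mul_nonneg (le_max_right _ _) (hP ω).le
    have h3 : 1 ≤ 1/ε := (le_div_iff₀ hε0).mpr (by linarith)
    have h4 : ∑ ω, (c ω - ζ) * P ω = (∑ ω, c ω * P ω) - ζ := by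
      simp only [sub_mul, Finset.sum_sub_distrib, ← Finset.mul_sum, hP1, mul_one]
    nlinarith [mul_le_mul_of_nonneg_right h3 h2]
  apply le_csInf
  · exact ⟨_, 1, one_pos, rfl⟩
  rintro x ⟨t, ht, rfl⟩
  -- the quantile ζ
  have hVne : (Finset.image c Finset.univ).Nonempty := Finset.univ_nonempty.image c
  set V := Finset.image c Finset.univ with hVdef
  set cands : Finset ℝ :=
    V.filter (fun v => ∑ ω ∈ univ.filter (fun ω => v < c ω), P ω ≤ ε) with hcandsdef
  have hcne : cands.Nonempty := by
    refine ⟨V.max' hVne, Finset.mem_filter.mpr ⟨V.max'_mem hVne, ?_⟩⟩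
    have he : univ.filter (fun ω => V.max' hVne < c ω) = ∅ := by
      ext ω
      simp only [Finset.mem_filter, Finset.mem_univ, true_and, Finset.notMem_empty, iff_false,
        not_lt]
      exact V.le_max' (c ω) (Finset.mem_image_of_mem c (Finset.mem_univ ω))
    rw [he, Finset.sum_empty]
    exact hε0.le
  set ζ : ℝ := cands.min' hcne with hζdef
  have hζc : ζ ∈ cands := cands.min'_mem hcne
  have hζV : ζ ∈ V := (Finset.mem_filter.mp hζc).1
  set a : ℝ := ∑ ω ∈ univ.filter (fun ω => ζ < c ω), P ω with hadef
  set s : ℝ := ∑ ω ∈ univ.filter (fun ω => c ω = ζ), P ω with hsdef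
  have ha : a ≤ ε := (Finset.mem_filter.mp hζc).2
  have hsne : (univ.filter (fun ω => c ω = ζ)).Nonempty := by
    obtain ⟨ω, -, hω⟩ := Finset.mem_image.mp hζV
    exact ⟨ω, Finset.mem_filter.mpr ⟨Finset.mem_univ ω, hω⟩⟩
  have hs : 0 < s := Finset.sum_pos (fun ω _ => hP ω) hsne
  -- ε ≤ a + s
  have hge : ∑ ω ∈ univ.filter (fun ω => ζ ≤ c ω), P ω = a + s := by
    rw [hadef, hsdef, ← Finset.sum_filter_add_sum_filter_not (univ.filter (fun ω => ζ ≤ c ω))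
      (fun ω => ζ < c ω), Finset.filter_filter, Finset.filter_filter]
    congr 1
    · apply Finset.sum_congr _ (fun _ _ => rfl)
      ext ω
      simp only [Finset.mem_filter, Finset.mem_univ, true_and]
      exact ⟨fun h => h.2, fun h => ⟨h.le, h⟩⟩
    · apply Finset.sum_congr _ (fun _ _ => rfl)
      ext ω
      simp only [Finset.mem_filter, Finset.mem_univ, true_and, not_lt]
      exact ⟨fun h => le_antisymm h.2 h.1, fun h => ⟨h.ge, h.le⟩⟩
  have has : ε ≤ a + s := by
    rw [← hge]
    by_cases hlt : ∃ ω, c ω < ζ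
    · set W := V.filter (fun v => v < ζ) with hWdef
      have hWne : W.Nonempty := by
        obtain ⟨ω, hω⟩ := hlt
        exact ⟨c ω, Finset.mem_filter.mpr ⟨Finset.mem_image_of_mem c (Finset.mem_univ ω), hω⟩⟩
      set v' := W.max' hWne with hv'def
      have hv'W : v' ∈ W := W.max'_mem hWne
      have hv'V : v' ∈ V := (Finset.mem_filter.mp hv'W).1
      have hv'lt : v' < ζ := (Finset.mem_filter.mp hv'W).2
      have hv'nc : v' ∉ cands := fun h => absurd (cands.min'_le v' h) (not_le.mpr hv'lt)
      have hv'gt : ε < ∑ ω ∈ univ.filter (fun ω => v' < c ω), P ω := by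
        by_contra h
        exact hv'nc (Finset.mem_filter.mpr ⟨hv'V, not_lt.mp h⟩)
      have heq : univ.filter (fun ω => v' < c ω) = univ.filter (fun ω => ζ ≤ c ω) := by
        ext ω
        simp only [Finset.mem_filter, Finset.mem_univ, true_and]
        constructor
        · intro h
          by_contra hc
          push_neg at hc
          have hmem : c ω ∈ W := Finset.mem_filter.mpr
            ⟨Finset.mem_image_of_mem c (Finset.mem_univ ω), hc⟩
          exact absurd (W.le_max' (c ω) hmem) (not_le.mpr h)
        · exact fun h => lt_of_lt_of_le hv'lt h
      rw [heq] at hv'gt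
      exact hv'gt.le
    · push_neg at hlt
      have hu : univ.filter (fun ω => ζ ≤ c ω) = univ := by
        ext ω
        simp only [Finset.mem_filter, Finset.mem_univ, true_and, iff_true]
        exact hlt ω
      rw [hu, hP1]
      exact hε1.le
  -- the dual measure q
  set q : Ω → ℝ := fun ω =>
    if ζ < c ω then P ω / ε else if c ω = ζ then P ω * ((ε - a) / (ε * s)) else 0 with hqdef
  have hqnn : ∀ ω, 0 ≤ q ω := by
    intro ω
    simp only [hqdef]
    split_ifs
    · exact div_nonneg (hP ω).le hε0.le
    · exact mul_nonneg (hP ω).le (div_nonneg (by linarith) (by positivity))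
    · exact le_refl 0
  have hqle : ∀ ω, q ω * ε ≤ P ω := by
    intro ω
    simp only [hqdef]
    split_ifs with h1 h2
    · rw [div_mul_cancel₀ _ (ne_of_gt hε0)]
    · have h1' : (ε - a) / (ε * s) * ε ≤ 1 := by
        rw [div_mul_eq_mul_div, div_le_one (by positivity)]
        nlinarith
      nlinarith [hP ω, mul_le_mul_of_nonneg_left h1' (hP ω).le]
    · nlinarith [hP ω]
  have hq1 : ∑ ω, q ω = 1 := by
    have hsplit := Finset.sum_filter_add_sum_filter_not univ (fun ω => ζ < c ω) q
    have e1 : ∑ ω ∈ univ.filter (fun ω => ζ < c ω), q ω = a / ε := by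
      rw [hadef, Finset.sum_div]
      apply Finset.sum_congr rfl
      intro ω hω
      have hmem := (Finset.mem_filter.mp hω).2
      simp only [hqdef, if_pos hmem]
    have e2 : ∑ ω ∈ univ.filter (fun ω => ¬ ζ < c ω), q ω = s * ((ε - a) / (ε * s)) := by
      have h2 := Finset.sum_filter_add_sum_filter_not
        (univ.filter (fun ω => ¬ ζ < c ω)) (fun ω => c ω = ζ) q
      have e3 : (univ.filter (fun ω => ¬ ζ < c ω)).filter (fun ω => c ω = ζ)
          = univ.filter (fun ω => c ω = ζ) := by
        rw [Finset.filter_filter]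
        ext ω
        simp only [Finset.mem_filter, Finset.mem_univ, true_and, not_lt]
        exact ⟨fun h => h.2, fun h => ⟨h.le, h⟩⟩
      have e4 : ∑ ω ∈ (univ.filter (fun ω => ¬ ζ < c ω)).filter (fun ω => c ω = ζ), q ω
          = s * ((ε - a) / (ε * s)) := by
        rw [e3, hsdef, Finset.sum_mul]
        apply Finset.sum_congr rfl
        intro ω hω
        have hne : c ω = ζ := (Finset.mem_filter.mp hω).2
        simp only [hqdef, if_neg (show ¬ ζ < c ω by rw [hne]; exact lt_irrefl _), if_pos hne]
        rw [← hsdef]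
      have e5 : ∑ ω ∈ (univ.filter (fun ω => ¬ ζ < c ω)).filter (fun ω => ¬ c ω = ζ), q ω
          = 0 := by
        apply Finset.sum_eq_zero
        intro ω hω
        have h2' : ¬ c ω = ζ := (Finset.mem_filter.mp hω).2
        have h3 : ¬ ζ < c ω := (Finset.mem_filter.mp (Finset.mem_filter.mp hω).1).2
        simp only [hqdef, if_neg h3, if_neg h2']
      rw [← h2, e4, e5, add_zero]
    rw [← hsplit, e1, e2]
    field_simp
    ring
  -- pointwise identity relating q to the CVaR integrand
  have hqc : ∀ ω, q ω * (c ω - ζ) = (1/ε) * (max (c ω - ζ) 0 * P ω) := by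
    intro ω
    rcases lt_trichotomy (c ω) ζ with h | h | h
    · simp only [hqdef, if_neg (not_lt.mpr h.le), if_neg (ne_of_lt h),
        max_eq_right (by linarith : c ω - ζ ≤ 0)]
      ring
    · simp only [hqdef, if_neg (show ¬ ζ < c ω by rw [h]; exact lt_irrefl _), if_pos h, h]
      simp
    · simp only [hqdef, if_pos h, max_eq_left (by linarith : (0:ℝ) ≤ c ω - ζ)]
      field_simp
  -- CVaR value at ζ equals E_q[c]
  have hA : ζ + (1/ε) * ∑ ω, max (c ω - ζ) 0 * P ω = ∑ ω, q ω * c ω := by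
    have h1 : ∑ ω, q ω * (c ω - ζ) = (∑ ω, q ω * c ω) - ζ := by
      simp only [mul_sub, Finset.sum_sub_distrib, ← Finset.sum_mul, hq1, one_mul]
    have h2 : (1/ε) * ∑ ω, max (c ω - ζ) 0 * P ω = ∑ ω, q ω * (c ω - ζ) := by
      rw [Finset.mul_sum]
      exact Finset.sum_congr rfl fun ω _ => (hqc ω).symm
    rw [h2, h1]
    ring
  -- Gibbs inequality
  set M : ℝ := ∑ ω, Real.exp (t * c ω) * P ω with hMdef
  have hM : 0 < M := Finset.sum_pos (fun ω _ => mul_pos (Real.exp_pos _) (hP ω)) univ_nonempty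
  have hgib := gibbs_aux q (fun ω => Real.exp (t * c ω) * P ω) hqnn hq1
    (fun ω => mul_pos (Real.exp_pos _) (hP ω))
  have e : ∑ ω, (q ω * Real.log (Real.exp (t * c ω) * P ω) - q ω * Real.log (q ω))
      = t * (∑ ω, q ω * c ω) + ∑ ω, (q ω * Real.log (P ω) - q ω * Real.log (q ω)) := by
    rw [Finset.mul_sum, ← Finset.sum_add_distrib]
    apply Finset.sum_congr rfl
    intro ω _
    rw [Real.log_mul (Real.exp_ne_zero _) (hP ω).ne', Real.log_exp]
    ring
  rw [e] at hgib
  -- KL bound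
  have hKL : ∑ ω, (q ω * Real.log (q ω) - q ω * Real.log (P ω)) ≤ -Real.log ε := by
    have hpt : ∀ ω, q ω * Real.log (q ω) - q ω * Real.log (P ω) ≤ q ω * (-Real.log ε) := by
      intro ω
      rcases eq_or_lt_of_le (hqnn ω) with h0 | h0
      · rw [← h0]; simp
      · have hdiv : q ω / P ω ≤ 1 / ε := by
          rw [div_le_div_iff₀ (hP ω) hε0]
          linarith [hqle ω]
        have hlog : Real.log (q ω / P ω) ≤ Real.log (1 / ε) :=
          Real.log_le_log (div_pos h0 (hP ω)) hdiv
        rw [Real.log_div (ne_of_gt h0) (hP ω).ne', Real.log_div one_ne_zero hε0.ne',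
          Real.log_one, zero_sub] at hlog
        nlinarith [mul_le_mul_of_nonneg_left hlog h0.le]
    calc ∑ ω, (q ω * Real.log (q ω) - q ω * Real.log (P ω))
        ≤ ∑ ω, q ω * (-Real.log ε) := Finset.sum_le_sum fun ω _ => hpt ω
      _ = -Real.log ε := by rw [← Finset.sum_mul, hq1, one_mul]
  have e2 : ∑ ω, (q ω * Real.log (P ω) - q ω * Real.log (q ω))
      = - ∑ ω, (q ω * Real.log (q ω) - q ω * Real.log (P ω)) := by
    rw [← Finset.sum_neg_distrib]
    exact Finset.sum_congr rfl fun ω _ => by ring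
  rw [e2] at hgib
  -- conclude
  have hfinal : t * (∑ ω, q ω * c ω) ≤ Real.log (M / ε) := by
    rw [Real.log_div hM.ne' hε0.ne']
    linarith
  have hAle : ∑ ω, q ω * c ω ≤ (1/t) * Real.log (M / ε) := by
    rw [one_div, inv_mul_eq_div, le_div_iff₀ ht]
    linarith [hfinal]
  refine le_trans (csInf_le hbdd ⟨ζ, rfl⟩) ?_
  rw [hA]
  exact hAle
end

section
/- As ε → 0⁺, EVaR_ε(c) converges to max(c): for every δ > 0 there exists ε₀ such that for all ε ∈ (0, ε₀), max(c) − δ ≤ EVaR_ε(c) ≤ max(c). -/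
open Finset

/-- As `ε → 0⁺`, `EVaR_ε(c)` converges to `max(c)`: for every `δ > 0` there is `ε₀ > 0`
such that for all `ε ∈ (0, ε₀)`, `max(c) − δ ≤ EVaR_ε(c) ≤ max(c)`. -/
theorem stmt19 {Ω : Type*} [Fintype Ω] [Nonempty Ω] (P : Ω → ℝ)
    (hP : ∀ ω, 0 < P ω) (hP1 : ∑ ω : Ω, P ω = 1) (c : Ω → ℝ) :
    let EVaR : ℝ → ℝ := fun ε => sInf {x : ℝ | ∃ ζ : ℝ, 0 < ζ ∧
      x = (1 / ζ) * Real.log ((∑ ω : Ω, Real.exp (ζ * c ω) * P ω) / ε)}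
    ∀ δ : ℝ, 0 < δ → ∃ ε₀ : ℝ, 0 < ε₀ ∧ ∀ ε : ℝ, 0 < ε → ε < ε₀ →
      Finset.univ.sup' Finset.univ_nonempty c - δ ≤ EVaR ε ∧
      EVaR ε ≤ Finset.univ.sup' Finset.univ_nonempty c := by
  intro EVaR δ hδ
  set M := Finset.univ.sup' Finset.univ_nonempty c with hM
  obtain ⟨ω₀, -, hω₀⟩ := Finset.exists_mem_eq_sup' (Finset.univ_nonempty (α := Ω)) c
  refine ⟨min 1 (P ω₀), lt_min one_pos (hP ω₀), ?_⟩
  intro ε hε hεlt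
  have hε1 : ε < 1 := lt_of_lt_of_le hεlt (min_le_left _ _)
  have hεp : ε < P ω₀ := lt_of_lt_of_le hεlt (min_le_right _ _)
  set S : Set ℝ := {x : ℝ | ∃ ζ : ℝ, 0 < ζ ∧
      x = (1 / ζ) * Real.log ((∑ ω : Ω, Real.exp (ζ * c ω) * P ω) / ε)} with hS
  have hEpos : ∀ ζ : ℝ, 0 < ∑ ω : Ω, Real.exp (ζ * c ω) * P ω := by
    intro ζ
    exact Finset.sum_pos (fun ω _ => mul_pos (Real.exp_pos _) (hP ω)) Finset.univ_nonempty
  -- every element of S is ≥ M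
  have hge : ∀ x ∈ S, M ≤ x := by
    rintro x ⟨ζ, hζ, rfl⟩
    have hE : Real.exp (ζ * M) * P ω₀ ≤ ∑ ω : Ω, Real.exp (ζ * c ω) * P ω := by
      have hMc : M = c ω₀ := hω₀
      rw [hMc]
      exact Finset.single_le_sum (f := fun ω => Real.exp (ζ * c ω) * P ω) (fun ω _ => le_of_lt (mul_pos (Real.exp_pos _) (hP ω)))
        (Finset.mem_univ ω₀)
    have hlogE : ζ * M + Real.log (P ω₀) ≤ Real.log (∑ ω : Ω, Real.exp (ζ * c ω) * P ω) := by
      calc ζ * M + Real.log (P ω₀) = Real.log (Real.exp (ζ * M) * P ω₀) := by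
            rw [Real.log_mul (Real.exp_ne_zero _) (ne_of_gt (hP ω₀)), Real.log_exp]
        _ ≤ _ := Real.log_le_log (mul_pos (Real.exp_pos _) (hP ω₀)) hE
    have hlogε : Real.log ε ≤ Real.log (P ω₀) := Real.log_le_log hε (le_of_lt hεp)
    rw [Real.log_div (ne_of_gt (hEpos ζ)) (ne_of_gt hε)]
    have : ζ * M ≤ Real.log (∑ ω : Ω, Real.exp (ζ * c ω) * P ω) - Real.log ε := by
      linarith
    calc M = (1 / ζ) * (ζ * M) := by field_simp
      _ ≤ _ := mul_le_mul_of_nonneg_left this (by positivity)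
  have hne : S.Nonempty := ⟨_, 1, one_pos, rfl⟩
  have hbdd : BddBelow S := ⟨M, hge⟩
  constructor
  · have : M ≤ sInf S := le_csInf hne hge
    linarith
  · -- sInf S ≤ M
    refine le_of_forall_pos_le_add ?_
    intro η hη
    set ζ : ℝ := max 1 ((-Real.log ε) / η) with hζdef
    have hζ : 0 < ζ := lt_of_lt_of_le one_pos (le_max_left _ _)
    have hlogεneg : Real.log ε ≤ 0 := Real.log_nonpos (le_of_lt hε) (le_of_lt hε1)
    have hmem : (1 / ζ) * Real.log ((∑ ω : Ω, Real.exp (ζ * c ω) * P ω) / ε) ∈ S :=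
      ⟨ζ, hζ, rfl⟩
    have hEle : ∑ ω : Ω, Real.exp (ζ * c ω) * P ω ≤ Real.exp (ζ * M) := by
      calc ∑ ω : Ω, Real.exp (ζ * c ω) * P ω
          ≤ ∑ ω : Ω, Real.exp (ζ * M) * P ω := by
            refine Finset.sum_le_sum (fun ω _ => ?_)
            exact mul_le_mul_of_nonneg_right (Real.exp_le_exp.2
              (mul_le_mul_of_nonneg_left (Finset.le_sup' c (Finset.mem_univ ω)) (le_of_lt hζ)))
              (le_of_lt (hP ω))
        _ = Real.exp (ζ * M) := by rw [← Finset.mul_sum, hP1, mul_one]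
    have hlogE : Real.log (∑ ω : Ω, Real.exp (ζ * c ω) * P ω) ≤ ζ * M := by
      calc Real.log (∑ ω : Ω, Real.exp (ζ * c ω) * P ω)
          ≤ Real.log (Real.exp (ζ * M)) := Real.log_le_log (hEpos ζ) hEle
        _ = ζ * M := Real.log_exp _
    have hxle : (1 / ζ) * Real.log ((∑ ω : Ω, Real.exp (ζ * c ω) * P ω) / ε)
        ≤ M + (-Real.log ε) / ζ := by
      rw [Real.log_div (ne_of_gt (hEpos ζ)) (ne_of_gt hε)]
      have h1 : Real.log (∑ ω : Ω, Real.exp (ζ * c ω) * P ω) - Real.log ε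
          ≤ ζ * M + (-Real.log ε) := by linarith
      calc (1 / ζ) * (Real.log (∑ ω : Ω, Real.exp (ζ * c ω) * P ω) - Real.log ε)
          ≤ (1 / ζ) * (ζ * M + (-Real.log ε)) :=
            mul_le_mul_of_nonneg_left h1 (by positivity)
        _ = M + (-Real.log ε) / ζ := by field_simp
    have htail : (-Real.log ε) / ζ ≤ η := by
      rw [div_le_iff₀ hζ]
      have : (-Real.log ε) / η ≤ ζ := le_max_right _ _
      calc -Real.log ε = ((-Real.log ε) / η) * η := by field_simp
        _ ≤ ζ * η := mul_le_mul_of_nonneg_right this (le_of_lt hη)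
        _ = η * ζ := mul_comm _ _
    calc sInf S ≤ _ := csInf_le hbdd hmem
      _ ≤ M + (-Real.log ε) / ζ := hxle
      _ ≤ M + η := by linarith
end
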